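/- Let L = ℤ₂⟨c₀, c₁, d₀, d₁⟩ and J the ideal generated by c₀d₀, c₀d₁ + c₁d₀, c₁d₁, d_i d_j (0 ≤ i, j ≤ 1), and d_i c_j (0 ≤ i, j ≤ 1). Then the quotient ring R = L/J has only trivial idempotents: if e² = e in R, then e = 0 or e = 1. -/

import Mathlib

noncomputable section

/-- The free `ℤ₂`-algebra on the four noncommuting generators `c₀, c₁, d₀, d₁`. -/
abbrev L : Type := FreeAlgebra (ZMod 2) (Fin 4)

def c0 : L := FreeAlgebra.ι (ZMod 2) 0
def c1 : L := FreeAlgebra.ι (ZMod 2) 1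
def d0 : L := FreeAlgebra.ι (ZMod 2) 2
def d1 : L := FreeAlgebra.ι (ZMod 2) 3

/-- The relations generating the two-sided ideal
`J = ⟨c₀d₀, c₀d₁ + c₁d₀, c₁d₁, dᵢdⱼ, dᵢcⱼ (0 ≤ i, j ≤ 1)⟩`. -/
inductive NielsenRel : L → L → Prop
  | r1 : NielsenRel (c0 * d0) 0
  | r2 : NielsenRel (c0 * d1 + c1 * d0) 0
  | r3 : NielsenRel (c1 * d1) 0
  | rdd : ∀ a b : L, (a = d0 ∨ a = d1) → (b = d0 ∨ b = d1) → NielsenRel (a * b) 0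
  | rdc : ∀ a b : L, (a = d0 ∨ a = d1) → (b = c0 ∨ b = c1) → NielsenRel (a * b) 0

/-- The quotient ring `S = L / J`. -/
abbrev NielsenRing : Type := RingQuot NielsenRel

open Polynomial

/-- shorthand for the quotient map -/
def mk : L →ₐ[ZMod 2] NielsenRing := RingQuot.mkAlgHom (ZMod 2) NielsenRel

lemma CX_mul_CX (x y : NielsenRing) :
    (C x * X) * (C y * X) = C (x * y) * (X * X) := by
  rw [mul_assoc, ← mul_assoc X (C y) X, X_mul_C, ← mul_assoc, ← mul_assoc, ← C_mul, mul_assoc]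

/-- pre-lift of the grading map -/
def Phi : L →ₐ[ZMod 2] Polynomial NielsenRing :=
  FreeAlgebra.lift (ZMod 2) (fun i => C (mk (FreeAlgebra.ι (ZMod 2) i)) * X)

lemma Phi_ι (i : Fin 4) :
    Phi (FreeAlgebra.ι (ZMod 2) i) = C (mk (FreeAlgebra.ι (ZMod 2) i)) * X :=
  FreeAlgebra.lift_ι_apply _ _

lemma Phi_mul_gen (i j : Fin 4) :
    Phi (FreeAlgebra.ι (ZMod 2) i * FreeAlgebra.ι (ZMod 2) j)
      = C (mk (FreeAlgebra.ι (ZMod 2) i * FreeAlgebra.ι (ZMod 2) j)) * (X * X) := by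
  rw [map_mul, Phi_ι, Phi_ι, CX_mul_CX, ← map_mul]

lemma Phi_rel : ∀ ⦃x y : L⦄, NielsenRel x y → Phi x = Phi y := by
  have key : ∀ i j : Fin 4,
      NielsenRel (FreeAlgebra.ι (ZMod 2) i * FreeAlgebra.ι (ZMod 2) j) 0 →
      Phi (FreeAlgebra.ι (ZMod 2) i * FreeAlgebra.ι (ZMod 2) j) = Phi 0 := by
    intro i j h
    have h0 : mk (FreeAlgebra.ι (ZMod 2) i * FreeAlgebra.ι (ZMod 2) j) = 0 := by
      simpa [mk] using RingQuot.mkAlgHom_rel (ZMod 2) h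
    rw [Phi_mul_gen, h0, map_zero, zero_mul, map_zero]
  intro x y h
  induction h with
  | r1 => exact key 0 2 NielsenRel.r1
  | r3 => exact key 1 3 NielsenRel.r3
  | rdd a b ha hb =>
      rcases ha with rfl | rfl <;> rcases hb with rfl | rfl <;>
        [exact key 2 2 (NielsenRel.rdd _ _ (Or.inl rfl) (Or.inl rfl));
         exact key 2 3 (NielsenRel.rdd _ _ (Or.inl rfl) (Or.inr rfl));
         exact key 3 2 (NielsenRel.rdd _ _ (Or.inr rfl) (Or.inl rfl));
         exact key 3 3 (NielsenRel.rdd _ _ (Or.inr rfl) (Or.inr rfl))]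
  | rdc a b ha hb =>
      rcases ha with rfl | rfl <;> rcases hb with rfl | rfl <;>
        [exact key 2 0 (NielsenRel.rdc _ _ (Or.inl rfl) (Or.inl rfl));
         exact key 2 1 (NielsenRel.rdc _ _ (Or.inl rfl) (Or.inr rfl));
         exact key 3 0 (NielsenRel.rdc _ _ (Or.inr rfl) (Or.inl rfl));
         exact key 3 1 (NielsenRel.rdc _ _ (Or.inr rfl) (Or.inr rfl))]
  | r2 =>
      have h0 : mk (c0 * d1 + c1 * d0) = 0 := by
        simpa [mk] using RingQuot.mkAlgHom_rel (ZMod 2) NielsenRel.r2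
      have : Phi (c0 * d1 + c1 * d0) = C (mk (c0 * d1 + c1 * d0)) * (X * X) := by
        rw [map_add, map_add, map_add]
        rw [show (c0 : L) * d1 = FreeAlgebra.ι (ZMod 2) 0 * FreeAlgebra.ι (ZMod 2) 3 from rfl,
          show (c1 : L) * d0 = FreeAlgebra.ι (ZMod 2) 1 * FreeAlgebra.ι (ZMod 2) 2 from rfl,
          Phi_mul_gen, Phi_mul_gen, add_mul]
      rw [this, h0, map_zero, zero_mul, map_zero]

def psi : NielsenRing →ₐ[ZMod 2] Polynomial NielsenRing :=
  RingQuot.liftAlgHom (ZMod 2) ⟨Phi, Phi_rel⟩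


/-- The augmentation on the free algebra. -/
def AugL : L →ₐ[ZMod 2] ZMod 2 := FreeAlgebra.lift (ZMod 2) (fun _ => (0 : ZMod 2))

lemma AugL_rel : ∀ ⦃x y : L⦄, NielsenRel x y → AugL x = AugL y := by
  intro x y h
  induction h with
  | r1 => simp [AugL, c0, d0]
  | r2 => simp [AugL, c0, c1, d0, d1]
  | r3 => simp [AugL, c1, d1]
  | rdd a b ha hb =>
      rcases ha with rfl | rfl <;> rcases hb with rfl | rfl <;> simp [AugL, d0, d1]
  | rdc a b ha hb =>
      rcases ha with rfl | rfl <;> rcases hb with rfl | rfl <;> simp [AugL, c0, c1, d0, d1]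

/-- The augmentation on the quotient. -/
def aug : NielsenRing →ₐ[ZMod 2] ZMod 2 :=
  RingQuot.liftAlgHom (ZMod 2) ⟨AugL, AugL_rel⟩

/-- Evaluation at `1`. -/
def E1 : Polynomial NielsenRing →ₐ[ZMod 2] NielsenRing :=
  Polynomial.eval₂AlgHom (AlgHom.id (ZMod 2) NielsenRing) 1 (fun a => Commute.one_right a)

lemma E1_psi : ∀ x : NielsenRing, E1 (psi x) = x := by
  have : E1.comp psi = AlgHom.id (ZMod 2) NielsenRing := by
    apply RingQuot.ringQuot_ext'
    apply FreeAlgebra.hom_ext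
    funext i
    simp only [AlgHom.comp_apply, Function.comp_apply]
    rw [show RingQuot.mkAlgHom (ZMod 2) NielsenRel (FreeAlgebra.ι (ZMod 2) i)
        = mk (FreeAlgebra.ι (ZMod 2) i) from rfl]
    rw [show psi (mk (FreeAlgebra.ι (ZMod 2) i)) = Phi (FreeAlgebra.ι (ZMod 2) i) from
      RingQuot.liftAlgHom_mkAlgHom_apply _ _ _ _, Phi_ι]
    show Polynomial.eval₂ _ 1 _ = _
    rw [Polynomial.eval₂_mul_X, Polynomial.eval₂_C]
    simp [mk]
  intro x
  exact congrArg (fun g => g x) this |>.trans rfl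
  
lemma coeff0_psi (x : NielsenRing) :
    (psi x).coeff 0 = algebraMap (ZMod 2) NielsenRing (aug x) := by
  have key : (Polynomial.eval₂AlgHom (AlgHom.id (ZMod 2) NielsenRing) 0
        (fun a => Commute.zero_right a)).comp psi
      = (Algebra.ofId (ZMod 2) NielsenRing).comp aug := by
    apply RingQuot.ringQuot_ext'
    apply FreeAlgebra.hom_ext
    funext i
    simp only [AlgHom.comp_apply, Function.comp_apply]
    rw [show psi (RingQuot.mkAlgHom (ZMod 2) NielsenRel (FreeAlgebra.ι (ZMod 2) i))
        = Phi (FreeAlgebra.ι (ZMod 2) i) from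
      RingQuot.liftAlgHom_mkAlgHom_apply _ _ _ _, Phi_ι]
    rw [show aug (RingQuot.mkAlgHom (ZMod 2) NielsenRel (FreeAlgebra.ι (ZMod 2) i))
        = AugL (FreeAlgebra.ι (ZMod 2) i) from
      RingQuot.liftAlgHom_mkAlgHom_apply _ _ _ _]
    show Polynomial.eval₂ _ 0 _ = _
    rw [Polynomial.eval₂_mul_X, Polynomial.eval₂_C, mul_zero]
    simp [AugL]
  have := congrArg (fun g => g x) key
  simp only [AlgHom.comp_apply] at this
  rw [show ((Polynomial.eval₂AlgHom (AlgHom.id (ZMod 2) NielsenRing) 0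
      (fun a => Commute.zero_right a)) (psi x)) = Polynomial.eval₂ _ 0 (psi x) from rfl,
    Polynomial.eval₂_at_zero] at this
  exact this

lemma poly_idem {A : Type*} [Semiring A] (p : Polynomial A)
    (h : p * p = p) (h0 : p.coeff 0 = 0) : p = 0 := by
  ext n
  induction n using Nat.strong_induction_on with
  | _ n ih =>
    match n with
    | 0 => simpa using h0
    | Nat.succ m =>
      have : p.coeff (m + 1) = ((p * p).coeff (m + 1)) := by rw [h]
      rw [Polynomial.coeff_mul] at this
      rw [this, Polynomial.coeff_zero]
      apply Finset.sum_eq_zero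
      intro x hx
      rw [Finset.HasAntidiagonal.mem_antidiagonal] at hx
      rcases Nat.eq_zero_or_pos x.2 with h2 | h2
      · rw [h2, h0, mul_zero]
      · have : x.1 < m + 1 := by omega
        rw [ih x.1 this]; simp
        
lemma two_eq_zero : (1 : NielsenRing) + 1 = 0 := by
  have h : ((1 : ZMod 2) + 1) = 0 := by decide
  calc (1 : NielsenRing) + 1 = algebraMap (ZMod 2) NielsenRing (1 + 1) := by
        rw [map_add, map_one]
    _ = 0 := by rw [h, map_zero]

lemma main0 (f : NielsenRing) (hf : f * f = f) (h0 : aug f = 0) : f = 0 := by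
  have hg : psi f * psi f = psi f := by rw [← map_mul, hf]
  have hc : (psi f).coeff 0 = 0 := by rw [coeff0_psi, h0, map_zero]
  have hz : psi f = 0 := poly_idem _ hg hc
  have := congrArg E1 hz
  rw [map_zero, E1_psi] at this
  exact this

/-- The ring `R = ℤ₂⟨c₀, c₁, d₀, d₁⟩ / ⟨c₀d₀, c₀d₁ + c₁d₀, c₁d₁, dᵢdⱼ, dᵢcⱼ⟩`
has only trivial idempotents. -/
theorem nielsenRing_trivial_idempotents :
    ∀ e : NielsenRing, e * e = e → e = 0 ∨ e = 1 := by
  intro e he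
  have hk : aug e = 0 ∨ aug e = 1 := by
    rcases (by decide : ∀ x : ZMod 2, x = 0 ∨ x = 1) (aug e) with h | h
    · exact Or.inl h
    · exact Or.inr h
  rcases hk with h | h
  · exact Or.inl (main0 e he h)
  · right
    have haug : aug (e + 1) = 0 := by
      rw [map_add, map_one, h]; decide
    have hee : e + e = 0 := by
      calc e + e = (1 + 1) * e := by rw [add_mul, one_mul]
        _ = 0 := by rw [two_eq_zero, zero_mul]
    have hsq : (e + 1) * (e + 1) = e + 1 := by
      have : (e + 1) * (e + 1) = e * e + (e + e) + 1 := by noncomm_ring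
      rw [this, he, hee, add_zero]
    have h0 : e + 1 = 0 := main0 _ hsq haug
    have := congrArg (· + 1) h0
    simpa [add_assoc, two_eq_zero] using this


end
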